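/- Assume in addition c ≠ 1. For all x, y ∈ ℂ with |x| < 1: Φ₁(a, b; c; q; x, y) − Φ₁(a, b; c; q; qx, y) = ((1−a)(1−b)/(1−c)) · x · Φ₁(aq, bq; cq; q; x, y). -/

import Mathlib

open scoped BigOperators

noncomputable section

/-- The q-shifted factorial `(a;q)_n = ∏_{r=0}^{n-1} (1 - a q^r)`. -/
def qPoch (q a : ℂ) (n : ℕ) : ℂ := ∏ r ∈ Finset.range n, (1 - a * q ^ r)

/-- The basic Humbert function `Φ₁(a,b;c;q;x,y)` as a double series over `ℕ × ℕ`. -/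
def Phi1 (q a b c x y : ℂ) : ℂ :=
  ∑' p : ℕ × ℕ,
    qPoch q a (p.1 + p.2) * qPoch q b p.1 * x ^ p.1 * y ^ p.2 /
      (qPoch q c (p.1 + p.2) * qPoch q q p.1 * qPoch q q p.2)

/-- The basic Humbert function `Φ₂(a,b;c;q;x,y)` as a double series over `ℕ × ℕ`. -/
def Phi2 (q a b c x y : ℂ) : ℂ :=
  ∑' p : ℕ × ℕ,
    qPoch q a p.1 * qPoch q b p.2 * x ^ p.1 * y ^ p.2 /
      (qPoch q c (p.1 + p.2) * qPoch q q p.1 * qPoch q q p.2)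

/-- The basic Humbert function `Φ₃(a;b;q;x,y)` as a double series over `ℕ × ℕ`. -/
def Phi3 (q a b x y : ℂ) : ℂ :=
  ∑' p : ℕ × ℕ,
    qPoch q a p.1 * x ^ p.1 * y ^ p.2 /
      (qPoch q b (p.1 + p.2) * qPoch q q p.1 * qPoch q q p.2)

/-- The one-variable q-difference operator. -/
def qDiff (q : ℂ) (f : ℂ → ℂ) : ℂ → ℂ := fun x => (f x - f (q * x)) / ((1 - q) * x)

/-- The q-difference operator in the first variable of a two-variable function. -/
def qDx (q : ℂ) (f : ℂ → ℂ → ℂ) : ℂ → ℂ → ℂ :=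
  fun x y => (f x y - f (q * x) y) / ((1 - q) * x)

/-- The q-difference operator in the second variable of a two-variable function. -/
def qDy (q : ℂ) (f : ℂ → ℂ → ℂ) : ℂ → ℂ → ℂ :=
  fun x y => (f x y - f x (q * y)) / ((1 - q) * y)

/-- The infinite q-shifted factorial `(a;q)_∞ = ∏_{r=0}^∞ (1 - a q^r)`. -/
def qPochInf (q a : ℂ) : ℂ := ∏' r : ℕ, (1 - a * q ^ r)


/-! ### Auxiliary lemmas -/

lemma geom_sum_le_inv' {t : ℝ} (h0 : 0 ≤ t) (h1 : t < 1) (n : ℕ) :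
    ∑ r ∈ Finset.range n, t ^ r ≤ (1 - t)⁻¹ := by
  rw [geom_sum_eq (by linarith : t ≠ 1)]
  rw [show (t ^ n - 1) / (t - 1) = (1 - t ^ n) / (1 - t) by
    rw [← neg_div_neg_eq]; ring_nf]
  rw [inv_eq_one_div, div_le_div_iff₀ (by linarith) (by linarith)]
  have htn : 0 ≤ t ^ n := pow_nonneg h0 n
  nlinarith

lemma exp_le_one_sub' {u : ℝ} (h0 : 0 ≤ u) (h2 : u ≤ 1 / 2) :
    Real.exp (-(2 * u)) ≤ 1 - u := by
  have h1 : (1:ℝ) + 2 * u ≤ Real.exp (2 * u) := by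
    have := Real.add_one_le_exp (2 * u); linarith
  have hpos : (0:ℝ) < 1 + 2 * u := by linarith
  rw [Real.exp_neg]
  have h3 : (Real.exp (2 * u))⁻¹ ≤ (1 + 2 * u)⁻¹ :=
    inv_anti₀ hpos h1
  have h4 : (1 + 2 * u)⁻¹ ≤ 1 - u := by
    rw [inv_le_iff_one_le_mul₀ hpos]
    nlinarith
  linarith

lemma qPoch_succ' (q a : ℂ) (n : ℕ) :
    qPoch q a (n + 1) = (1 - a) * qPoch q (a * q) n := by
  unfold qPoch
  rw [Finset.prod_range_succ']
  rw [mul_comm]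
  congr 1
  · simp
  · exact Finset.prod_congr rfl fun r _ => by ring

lemma qPoch_q_succ (q : ℂ) (n : ℕ) :
    qPoch q q (n + 1) = qPoch q q n * (1 - q ^ (n + 1)) := by
  unfold qPoch
  rw [Finset.prod_range_succ, pow_succ']

lemma qPoch_q_factor_ne_zero {q : ℂ} (hq1 : ‖q‖ < 1) (r : ℕ) :
    1 - q * q ^ r ≠ 0 := by
  intro h
  have h2 : q ^ (r + 1) = 1 := by rw [pow_succ']; linear_combination -h
  have := congrArg (‖·‖) h2
  rw [norm_pow, norm_one] at this
  have : ‖q‖ ^ (r + 1) < 1 :=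
    pow_lt_one₀ (norm_nonneg q) hq1 (Nat.succ_ne_zero r)
  simp_all

lemma qPoch_q_ne_zero {q : ℂ} (hq1 : ‖q‖ < 1) (n : ℕ) :
    qPoch q q n ≠ 0 :=
  Finset.prod_ne_zero_iff.2 fun r _ => qPoch_q_factor_ne_zero hq1 r

lemma qPoch_c_factor_ne_zero {q c : ℂ} (hq0 : 0 < ‖q‖)
    (hc : ∀ m : ℕ, c ≠ q ^ (-(m : ℤ))) (r : ℕ) : 1 - c * q ^ r ≠ 0 := by
  intro h
  have hq : q ≠ 0 := by
    intro h0; rw [h0] at hq0; simp at hq0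
  apply hc r
  have : c * q ^ r = 1 := by linear_combination -h
  rw [zpow_neg, zpow_natCast]
  exact eq_inv_of_mul_eq_one_left this

lemma qPoch_c_ne_zero {q c : ℂ} (hq0 : 0 < ‖q‖)
    (hc : ∀ m : ℕ, c ≠ q ^ (-(m : ℤ))) (n : ℕ) : qPoch q c n ≠ 0 :=
  Finset.prod_ne_zero_iff.2 fun r _ => qPoch_c_factor_ne_zero hq0 hc r

lemma shift_root {q z : ℂ} (hq : q ≠ 0) (h : ∀ m : ℕ, z ≠ q ^ (-(m : ℤ))) :
    ∀ m : ℕ, z * q ≠ q ^ (-(m : ℤ)) := by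
  intro m hm
  apply h (m + 1)
  have key : q ^ (-(((m + 1) : ℕ) : ℤ)) * q = q ^ (-(m : ℤ)) := by
    nth_rewrite 2 [← zpow_one q]
    rw [← zpow_add₀ hq]
    congr 1
    push_cast
    ring

  exact mul_right_cancel₀ hq (hm.trans key.symm)

lemma qPoch_abs_le (q a : ℂ) (hq1 : ‖q‖ < 1) (n : ℕ) :
    ‖qPoch q a n‖ ≤ Real.exp (‖a‖ * (1 - ‖q‖)⁻¹) := by
  unfold qPoch
  rw [norm_prod]
  calc ∏ r ∈ Finset.range n, ‖1 - a * q ^ r‖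
      ≤ ∏ r ∈ Finset.range n, Real.exp (‖a‖ * ‖q‖ ^ r) := by
        apply Finset.prod_le_prod (fun r _ => norm_nonneg _)
        intro r _
        calc ‖1 - a * q ^ r‖ ≤ 1 + ‖a‖ * ‖q‖ ^ r := by
              have := norm_sub_le (1 : ℂ) (a * q ^ r)
              simpa using this
          _ ≤ Real.exp (‖a‖ * ‖q‖ ^ r) := by
              have := Real.add_one_le_exp (‖a‖ * ‖q‖ ^ r)
              linarith
    _ = Real.exp (∑ r ∈ Finset.range n, ‖a‖ * ‖q‖ ^ r) := by
        rw [Real.exp_sum]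
    _ ≤ Real.exp (‖a‖ * (1 - ‖q‖)⁻¹) := by
        apply Real.exp_le_exp.2
        rw [← Finset.mul_sum]
        apply mul_le_mul_of_nonneg_left _ (norm_nonneg a)
        exact geom_sum_le_inv' (norm_nonneg q) hq1 n

lemma qPoch_abs_lb (q a : ℂ) (hq1 : ‖q‖ < 1)
    (h : ∀ r : ℕ, 1 - a * q ^ r ≠ 0) :
    ∃ δ : ℝ, 0 < δ ∧ ∀ n, δ ≤ ‖qPoch q a n‖ := by
  set t := ‖q‖ with ht
  set ca := ‖a‖ with hca
  have ht0 : 0 ≤ t := norm_nonneg q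
  have hca0 : 0 ≤ ca := norm_nonneg a
  obtain ⟨N, hN⟩ : ∃ N, ca * t ^ N ≤ 1 / 2 := by
    have h1 : Filter.Tendsto (fun n => ca * t ^ n) Filter.atTop (nhds (ca * 0)) :=
      (tendsto_pow_atTop_nhds_zero_of_lt_one ht0 hq1).const_mul ca
    rw [mul_zero] at h1
    have := (h1.eventually_le_const (by norm_num : (0:ℝ) < 1/2)).exists
    simpa using this
  set δ₀ := ∏ r ∈ Finset.range N, min (‖1 - a * q ^ r‖) 1 with hδ₀
  set E := Real.exp (-(2 * (ca * (1 - t)⁻¹))) with hE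
  have hminpos : ∀ r, 0 < min (‖1 - a * q ^ r‖) 1 := fun r =>
    lt_min (norm_pos_iff.2 (h r)) one_pos
  have hδ₀pos : 0 < δ₀ := Finset.prod_pos fun r _ => hminpos r
  have hEpos : 0 < E := Real.exp_pos _
  have hE1 : E ≤ 1 := by
    rw [hE, Real.exp_le_one_iff]
    have : 0 ≤ ca * (1 - t)⁻¹ := mul_nonneg hca0 (inv_nonneg.2 (by linarith))
    linarith
  refine ⟨δ₀ * E, mul_pos hδ₀pos hEpos, fun n => ?_⟩
  set m := min n N with hm
  have hmn : m ≤ n := min_le_left _ _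
  have hmN : m ≤ N := min_le_right _ _
  have habs : ‖qPoch q a n‖ =
      (∏ r ∈ Finset.range m, ‖1 - a * q ^ r‖) *
      ∏ r ∈ Finset.Ico m n, ‖1 - a * q ^ r‖ := by
    rw [qPoch, norm_prod, Finset.prod_range_mul_prod_Ico _ hmn]
  rw [habs]
  apply mul_le_mul
  · -- δ₀ ≤ ∏_{range m}
    calc δ₀ = (∏ r ∈ Finset.range m, min (‖1 - a * q ^ r‖) 1) *
          ∏ r ∈ Finset.Ico m N, min (‖1 - a * q ^ r‖) 1 := by
          rw [hδ₀, Finset.prod_range_mul_prod_Ico _ hmN]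
      _ ≤ (∏ r ∈ Finset.range m, min (‖1 - a * q ^ r‖) 1) * 1 := by
          apply mul_le_mul_of_nonneg_left _ (Finset.prod_nonneg fun r _ => (hminpos r).le)
          exact Finset.prod_le_one (fun r _ => (hminpos r).le) (fun r _ => min_le_right _ _)
      _ ≤ ∏ r ∈ Finset.range m, ‖1 - a * q ^ r‖ := by
          rw [mul_one]
          exact Finset.prod_le_prod (fun r _ => (hminpos r).le)
            (fun r _ => min_le_left _ _)
  · -- E ≤ ∏_{Ico m n}
    have key : ∀ r ∈ Finset.Ico m n, Real.exp (-(2 * (ca * t ^ r))) ≤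
        ‖1 - a * q ^ r‖ := by
      intro r hr
      have hrN : N ≤ r := by
        rcases Finset.mem_Ico.1 hr with ⟨h1, h2⟩
        rcases le_or_gt N n with hNn | hNn
        · have : m = N := min_eq_right hNn; omega
        · have : m = n := min_eq_left hNn.le; omega
      have htr : ca * t ^ r ≤ 1 / 2 := by
        have : t ^ r ≤ t ^ N := pow_le_pow_of_le_one ht0 hq1.le hrN
        nlinarith
      have h1 : 1 - ca * t ^ r ≤ ‖1 - a * q ^ r‖ := by
        have := norm_sub_norm_le (1 : ℂ) (a * q ^ r)
        simpa using this
      have := exp_le_one_sub' (u := ca * t ^ r) (by positivity) htr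
      linarith
    have hsum : ∑ r ∈ Finset.Ico m n, t ^ r ≤ (1 - t)⁻¹ := by
      calc ∑ r ∈ Finset.Ico m n, t ^ r ≤ ∑ r ∈ Finset.range n, t ^ r := by
            apply Finset.sum_le_sum_of_subset_of_nonneg
            · intro r hr
              rcases Finset.mem_Ico.1 hr with ⟨_, h2⟩
              exact Finset.mem_range.2 h2
            · intro r _ _; exact pow_nonneg ht0 r
        _ ≤ (1 - t)⁻¹ := geom_sum_le_inv' ht0 hq1 n
    calc E ≤ Real.exp (∑ r ∈ Finset.Ico m n, -(2 * (ca * t ^ r))) := by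
          apply Real.exp_le_exp.2
          rw [show ∑ r ∈ Finset.Ico m n, -(2 * (ca * t ^ r)) =
              -(2 * (ca * ∑ r ∈ Finset.Ico m n, t ^ r)) by
            rw [Finset.mul_sum, Finset.mul_sum, Finset.sum_neg_distrib]]
          nlinarith
      _ = ∏ r ∈ Finset.Ico m n, Real.exp (-(2 * (ca * t ^ r))) := by
          rw [Real.exp_sum]
      _ ≤ ∏ r ∈ Finset.Ico m n, ‖1 - a * q ^ r‖ :=
          Finset.prod_le_prod (fun r _ => (Real.exp_pos _).le) key
  · exact hEpos.le
  · exact Finset.prod_nonneg fun r _ => norm_nonneg _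

lemma summable_phi1_term {q a b c x y : ℂ} (hq0 : 0 < ‖q‖)
    (hq1 : ‖q‖ < 1) (hc : ∀ m : ℕ, c ≠ q ^ (-(m : ℤ)))
    (hx : ‖x‖ < 1) (hy : ‖y‖ < 1) :
    Summable (fun p : ℕ × ℕ =>
      qPoch q a (p.1 + p.2) * qPoch q b p.1 * x ^ p.1 * y ^ p.2 /
        (qPoch q c (p.1 + p.2) * qPoch q q p.1 * qPoch q q p.2)) := by
  obtain ⟨δc, hδc, hlbc⟩ := qPoch_abs_lb q c hq1 (qPoch_c_factor_ne_zero hq0 hc)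
  obtain ⟨δq, hδq, hlbq⟩ := qPoch_abs_lb q q hq1 (qPoch_q_factor_ne_zero hq1)
  obtain ⟨Ca, hCa0, hCa⟩ : ∃ C : ℝ, 0 < C ∧ ∀ n, ‖qPoch q a n‖ ≤ C :=
    ⟨_, Real.exp_pos _, fun n => qPoch_abs_le q a hq1 n⟩
  obtain ⟨Cb, hCb0, hCb⟩ : ∃ C : ℝ, 0 < C ∧ ∀ n, ‖qPoch q b n‖ ≤ C :=
    ⟨_, Real.exp_pos _, fun n => qPoch_abs_le q b hq1 n⟩
  apply Summable.of_norm_bounded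
    (g := fun p : ℕ × ℕ =>
      (Ca * Cb / (δc * δq * δq) * ‖x‖ ^ p.1) * ‖y‖ ^ p.2)
  · exact Summable.mul_of_nonneg
      (f := fun n => Ca * Cb / (δc * δq * δq) * ‖x‖ ^ n)
      (g := fun k => ‖y‖ ^ k)
      ((summable_geometric_of_lt_one (norm_nonneg x) hx).mul_left _)
      (summable_geometric_of_lt_one (norm_nonneg y) hy)
      (fun n => by positivity) (fun k => by positivity)
  · intro p
    simp only [norm_div, norm_mul, norm_pow]
    have hxp : (0:ℝ) ≤ ‖x‖ ^ p.1 := by positivity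
    have hyp : (0:ℝ) ≤ ‖y‖ ^ p.2 := by positivity
    have hnum : ‖qPoch q a (p.1 + p.2)‖ * ‖qPoch q b p.1‖ *
        ‖x‖ ^ p.1 * ‖y‖ ^ p.2 ≤
        Ca * Cb * ‖x‖ ^ p.1 * ‖y‖ ^ p.2 := by
      have h1 := hCa (p.1 + p.2)
      have h2 := hCb p.1
      have s1 : ‖qPoch q a (p.1 + p.2)‖ * ‖qPoch q b p.1‖ ≤
          Ca * Cb := mul_le_mul h1 h2 (norm_nonneg _) hCa0.le
      have s2 := mul_le_mul s1 (le_refl (‖x‖ ^ p.1)) hxp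
        (mul_pos hCa0 hCb0).le
      exact mul_le_mul s2 (le_refl (‖y‖ ^ p.2)) hyp
        (by positivity)
    have hden : δc * δq * δq ≤ ‖qPoch q c (p.1 + p.2)‖ *
        ‖qPoch q q p.1‖ * ‖qPoch q q p.2‖ := by
      have h1 := hlbc (p.1 + p.2); have h2 := hlbq p.1; have h3 := hlbq p.2
      have s1 : δc * δq ≤ ‖qPoch q c (p.1 + p.2)‖ *
          ‖qPoch q q p.1‖ := mul_le_mul h1 h2 hδq.le (norm_nonneg _)
      exact mul_le_mul s1 h3 hδq.le
        (mul_nonneg (norm_nonneg _) (norm_nonneg _))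
    calc ‖qPoch q a (p.1 + p.2)‖ * ‖qPoch q b p.1‖ *
          ‖x‖ ^ p.1 * ‖y‖ ^ p.2 /
          (‖qPoch q c (p.1 + p.2)‖ * ‖qPoch q q p.1‖ *
            ‖qPoch q q p.2‖)
        ≤ Ca * Cb * ‖x‖ ^ p.1 * ‖y‖ ^ p.2 / (δc * δq * δq) :=
          div_le_div₀ (by positivity) hnum (by positivity) hden
      _ = Ca * Cb / (δc * δq * δq) * ‖x‖ ^ p.1 * ‖y‖ ^ p.2 := by
          ring

lemma qPoch_eq_zero_of_root {q a : ℂ} (m : ℕ) (ha : a = q ^ (-(m : ℤ)))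
    (hq : q ≠ 0) {n : ℕ} (hn : m < n) : qPoch q a n = 0 := by
  apply Finset.prod_eq_zero (Finset.mem_range.2 hn)
  rw [ha]
  have : (q ^ (-(m : ℤ)) : ℂ) * q ^ m = 1 := by
    rw [← zpow_natCast q m, ← zpow_add₀ hq]
    simp
  rw [this]; ring

lemma summable_phi1_term_of_root {q a b c x y : ℂ} (hq0 : 0 < ‖q‖)
    (m : ℕ) (ha : a = q ^ (-(m : ℤ))) :
    Summable (fun p : ℕ × ℕ =>
      qPoch q a (p.1 + p.2) * qPoch q b p.1 * x ^ p.1 * y ^ p.2 /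
        (qPoch q c (p.1 + p.2) * qPoch q q p.1 * qPoch q q p.2)) := by
  have hq : q ≠ 0 := by
    intro h0; rw [h0] at hq0; simp at hq0
  apply summable_of_ne_finset_zero (s := Finset.range (m + 1) ×ˢ Finset.range (m + 1))
  intro p hp
  have : m < p.1 + p.2 := by
    simp only [Finset.mem_product, Finset.mem_range, not_and_or, not_lt] at hp
    omega
  rw [qPoch_eq_zero_of_root m ha hq this]
  simp

lemma not_summable_phi1_term {q a b c x y : ℂ} (hq0 : 0 < ‖q‖)
    (hq1 : ‖q‖ < 1) (ha : ∀ m : ℕ, a ≠ q ^ (-(m : ℤ)))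
    (hc : ∀ m : ℕ, c ≠ q ^ (-(m : ℤ))) (hy : 1 ≤ ‖y‖) :
    ¬ Summable (fun p : ℕ × ℕ =>
      qPoch q a (p.1 + p.2) * qPoch q b p.1 * x ^ p.1 * y ^ p.2 /
        (qPoch q c (p.1 + p.2) * qPoch q q p.1 * qPoch q q p.2)) := by
  intro hs
  obtain ⟨δa, hδa, hlba⟩ := qPoch_abs_lb q a hq1 (qPoch_c_factor_ne_zero hq0 ha)
  obtain ⟨Cc, hCc0, hCc⟩ : ∃ C : ℝ, 0 < C ∧ ∀ n, ‖qPoch q c n‖ ≤ C :=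
    ⟨_, Real.exp_pos _, fun n => qPoch_abs_le q c hq1 n⟩
  obtain ⟨Cq, hCq0, hCq⟩ : ∃ C : ℝ, 0 < C ∧ ∀ n, ‖qPoch q q n‖ ≤ C :=
    ⟨_, Real.exp_pos _, fun n => qPoch_abs_le q q hq1 n⟩
  have hinj : Function.Injective (fun k : ℕ => ((0 : ℕ), k)) := by
    intro k1 k2 h; simpa using h
  have hcol := hs.comp_injective hinj
  have htendnorm : Filter.Tendsto
      (fun k : ℕ => ‖qPoch q a (0 + k) * qPoch q b 0 * x ^ 0 * y ^ k /
        (qPoch q c (0 + k) * qPoch q q 0 * qPoch q q k)‖) Filter.atTop (nhds 0) := by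
    have := hcol.tendsto_atTop_zero.norm
    simpa using this
  have hlb : ∀ k : ℕ, δa / (Cc * Cq) ≤
      ‖qPoch q a (0 + k) * qPoch q b 0 * x ^ 0 * y ^ k /
        (qPoch q c (0 + k) * qPoch q q 0 * qPoch q q k)‖ := by
    intro k
    have h0 : qPoch q b 0 = 1 := Finset.prod_range_zero _
    have h0' : qPoch q q 0 = 1 := Finset.prod_range_zero _
    simp only [zero_add, h0, h0', pow_zero, mul_one, one_mul]
    simp only [norm_div, norm_mul, norm_pow]
    have hyk : (1:ℝ) ≤ ‖y‖ ^ k := one_le_pow₀ hy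
    have hnum : δa ≤ ‖qPoch q a k‖ * ‖y‖ ^ k := by
      calc δa = δa * 1 := by ring
        _ ≤ ‖qPoch q a k‖ * ‖y‖ ^ k :=
          mul_le_mul (hlba k) hyk zero_le_one (norm_nonneg _)
    have hden : ‖qPoch q c k‖ * ‖qPoch q q k‖ ≤ Cc * Cq :=
      mul_le_mul (hCc k) (hCq k) (norm_nonneg _) hCc0.le
    have hdenpos : 0 < ‖qPoch q c k‖ * ‖qPoch q q k‖ :=
      mul_pos (norm_pos_iff.2 (qPoch_c_ne_zero hq0 hc k))
        (norm_pos_iff.2 (qPoch_q_ne_zero hq1 k))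
    exact div_le_div₀ (le_trans hδa.le hnum) hnum hdenpos hden
  have := ge_of_tendsto' htendnorm hlb
  have hpos : 0 < δa / (Cc * Cq) := by positivity
  linarith

lemma term_identity {q a b c x y : ℂ} (hq0 : 0 < ‖q‖)
    (hq1 : ‖q‖ < 1) (hc : ∀ m : ℕ, c ≠ q ^ (-(m : ℤ))) (n k : ℕ) :
    qPoch q a (n + 1 + k) * qPoch q b (n + 1) * x ^ (n + 1) * y ^ k /
        (qPoch q c (n + 1 + k) * qPoch q q (n + 1) * qPoch q q k) -
      qPoch q a (n + 1 + k) * qPoch q b (n + 1) * (q * x) ^ (n + 1) * y ^ k /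
        (qPoch q c (n + 1 + k) * qPoch q q (n + 1) * qPoch q q k) =
      (1 - a) * (1 - b) / (1 - c) * x *
        (qPoch q (a * q) (n + k) * qPoch q (b * q) n * x ^ n * y ^ k /
          (qPoch q (c * q) (n + k) * qPoch q q n * qPoch q q k)) := by
  have hre : n + 1 + k = (n + k) + 1 := by omega
  rw [hre, qPoch_succ' q a (n + k), qPoch_succ' q b n, qPoch_succ' q c (n + k)]
  have hq1ne : 1 - q ^ (n + 1) ≠ 0 := by
    have hne := qPoch_q_ne_zero hq1 (n + 1)
    rw [qPoch_q_succ] at hne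
    exact right_ne_zero_of_mul hne
  have hcq : qPoch q (c * q) (n + k) ≠ 0 := by
    have hne := qPoch_c_ne_zero hq0 hc ((n + k) + 1)
    rw [qPoch_succ'] at hne
    exact right_ne_zero_of_mul hne
  have hc1 : (1 : ℂ) - c ≠ 0 := by
    have hne := qPoch_c_ne_zero hq0 hc 1
    simpa [qPoch] using hne
  have hqn : qPoch q q n ≠ 0 := qPoch_q_ne_zero hq1 n
  have hqk : qPoch q q k ≠ 0 := qPoch_q_ne_zero hq1 k
  rw [qPoch_q_succ q n]
  rw [mul_pow (q) x (n + 1)]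
  field_simp
  ring

lemma phi1_main {q a b c x y : ℂ} (hq0 : 0 < ‖q‖)
    (hq1 : ‖q‖ < 1) (hc : ∀ m : ℕ, c ≠ q ^ (-(m : ℤ)))
    (hf : Summable (fun p : ℕ × ℕ =>
      qPoch q a (p.1 + p.2) * qPoch q b p.1 * x ^ p.1 * y ^ p.2 /
        (qPoch q c (p.1 + p.2) * qPoch q q p.1 * qPoch q q p.2)))
    (hg : Summable (fun p : ℕ × ℕ =>
      qPoch q a (p.1 + p.2) * qPoch q b p.1 * (q * x) ^ p.1 * y ^ p.2 /
        (qPoch q c (p.1 + p.2) * qPoch q q p.1 * qPoch q q p.2))) :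
    Phi1 q a b c x y - Phi1 q a b c (q * x) y =
      (1 - a) * (1 - b) / (1 - c) * x * Phi1 q (a * q) (b * q) (c * q) x y := by
  set F : ℕ × ℕ → ℂ := fun p =>
    qPoch q a (p.1 + p.2) * qPoch q b p.1 * x ^ p.1 * y ^ p.2 /
        (qPoch q c (p.1 + p.2) * qPoch q q p.1 * qPoch q q p.2) -
    qPoch q a (p.1 + p.2) * qPoch q b p.1 * (q * x) ^ p.1 * y ^ p.2 /
        (qPoch q c (p.1 + p.2) * qPoch q q p.1 * qPoch q q p.2) with hF
  have h1 : Phi1 q a b c x y - Phi1 q a b c (q * x) y = ∑' p, F p := by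
    rw [Phi1, Phi1, ← Summable.tsum_sub hf hg]
  have hi : Function.Injective (fun p : ℕ × ℕ => (p.1 + 1, p.2)) := by
    intro p1 p2 h
    simp only [Prod.mk.injEq] at h
    exact Prod.ext (by omega) h.2
  have hsupp : Function.support F ⊆ Set.range (fun p : ℕ × ℕ => (p.1 + 1, p.2)) := by
    intro p hp
    rcases p with ⟨n, k⟩
    cases n with
    | zero =>
        exfalso
        apply hp
        simp [hF]
    | succ n => exact ⟨(n, k), rfl⟩
  have h2 : ∑' p : ℕ × ℕ, F (p.1 + 1, p.2) = ∑' p, F p :=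
    Function.Injective.tsum_eq hi hsupp
  have h3 : ∀ p : ℕ × ℕ, F (p.1 + 1, p.2) =
      (1 - a) * (1 - b) / (1 - c) * x *
        (qPoch q (a * q) (p.1 + p.2) * qPoch q (b * q) p.1 * x ^ p.1 * y ^ p.2 /
          (qPoch q (c * q) (p.1 + p.2) * qPoch q q p.1 * qPoch q q p.2)) := by
    intro p
    exact term_identity hq0 hq1 hc p.1 p.2
  rw [h1, ← h2]
  calc ∑' p : ℕ × ℕ, F (p.1 + 1, p.2)
      = ∑' p : ℕ × ℕ, (1 - a) * (1 - b) / (1 - c) * x *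
        (qPoch q (a * q) (p.1 + p.2) * qPoch q (b * q) p.1 * x ^ p.1 * y ^ p.2 /
          (qPoch q (c * q) (p.1 + p.2) * qPoch q q p.1 * qPoch q q p.2)) :=
        tsum_congr h3
    _ = (1 - a) * (1 - b) / (1 - c) * x * Phi1 q (a * q) (b * q) (c * q) x y := by
        rw [Phi1, tsum_mul_left]

/-- the relation `[Θ_{x,q}]_q Φ₁ = ([α]_q[β]_q/[γ]_q) x Φ₁(aq,bq;cq)` written out. -/
theorem phi1_theta_x (q a b c : ℂ) (hq0 : 0 < ‖q‖) (hq1 : ‖q‖ < 1)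
    (hc : ∀ m : ℕ, c ≠ q ^ (-(m : ℤ))) (hc1 : c ≠ 1) (x y : ℂ) (hx : ‖x‖ < 1) :
    Phi1 q a b c x y - Phi1 q a b c (q * x) y =
      (1 - a) * (1 - b) / (1 - c) * x * Phi1 q (a * q) (b * q) (c * q) x y := by
  have hq : q ≠ 0 := by
    intro h0; rw [h0] at hq0; simp at hq0
  by_cases hy : ‖y‖ < 1
  · have hqx : ‖q * x‖ < 1 := by
      rw [norm_mul]
      nlinarith [norm_nonneg q, norm_nonneg x]
    exact phi1_main hq0 hq1 hc (summable_phi1_term hq0 hq1 hc hx hy)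
      (summable_phi1_term hq0 hq1 hc hqx hy)
  · by_cases ha : ∃ m : ℕ, a = q ^ (-(m : ℤ))
    · obtain ⟨m, hm⟩ := ha
      exact phi1_main hq0 hq1 hc (summable_phi1_term_of_root hq0 m hm)
        (summable_phi1_term_of_root hq0 m hm)
    · push_neg at ha hy
      have haq : ∀ m : ℕ, a * q ≠ q ^ (-(m : ℤ)) := shift_root hq ha
      have hcq : ∀ m : ℕ, c * q ≠ q ^ (-(m : ℤ)) := shift_root hq hc
      rw [Phi1, Phi1, Phi1,
        tsum_eq_zero_of_not_summable (not_summable_phi1_term hq0 hq1 ha hc hy),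
        tsum_eq_zero_of_not_summable (not_summable_phi1_term hq0 hq1 ha hc hy),
        tsum_eq_zero_of_not_summable (not_summable_phi1_term hq0 hq1 haq hcq hy)]
      ring
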